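/- Let 𝒢=(V,E) be a temporal graph, R=(v_1,…,v_k) a route in 𝒢, and x,δ∈ℕ. Define the table A by A_{R_1}[y]=0 for all 0≤y≤x, and A_{R_i}[y] = max_{0≤y'≤y} arrival(v_{i−1}, v_i, A_{R_{i−1}}[y'], y−y') for 2≤i≤k, where for vertices v,w, a value t∈ℕ∪{∞} and y∈ℕ: arrival(v,w,t,y)=∞ if t=∞ or E(v,w,t)=∅, and otherwise arrival(v,w,t,y)=min{t(a_1)+λ(a_1)+δ, t(a_{y+1})+λ(a_{y+1})} where a_1,…,a_ℓ lists E(v,w,t)={(v,w,t',λ)∈E : t'≥t} in nondecreasing order of arrival time t(a)+λ(a) and the second term is omitted if ℓ≤y. Then for every j∈[k] and every 0≤y≤x, A_{R_j}[y] equals the worst-case arrival time of the prefix route R_j=(v_1,…,v_j) for y delays. -/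

import Mathlib

/-- A time arc of a temporal graph: start vertex, end vertex, time label, traversal time. -/
structure TimeArc (V : Type) where
  src : V
  dst : V
  time : ℕ
  trav : ℕ
deriving DecidableEq

variable {V : Type}

/-- `P` is a `D`-traversal-delayed temporal walk in the temporal graph with time-arc set `E`
(with delay time `δ`). -/
def IsTDWalk [DecidableEq V] (E D : Finset (TimeArc V)) (δ : ℕ)
    (P : List (TimeArc V)) : Prop :=
  (∀ e ∈ P, e ∈ E) ∧
  P.Chain' (fun e f => f.src = e.dst ∧
    e.time + e.trav + (if e ∈ D then δ else 0) ≤ f.time)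

/-- `P` is a `D`-starting-delayed temporal walk in the temporal graph with time-arc set `E`
(with delay time `δ`). -/
def IsSDWalk [DecidableEq V] (E D : Finset (TimeArc V)) (δ : ℕ)
    (P : List (TimeArc V)) : Prop :=
  (∀ e ∈ P, e ∈ E) ∧
  P.Chain' (fun e f => f.src = e.dst ∧
    e.time + e.trav + (if e ∈ D then δ else 0) ≤ f.time + (if f ∈ D then δ else 0))

/-- The sequence of vertices visited by a walk: the start vertex of its first arc followed by
the end vertices of all its arcs. -/
def visits : List (TimeArc V) → List V
  | [] => []
  | e :: es => e.src :: (e :: es).map TimeArc.dst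

/-- The walk `P` follows the route `R`: the visited vertex sequence of `P` equals `R`
(the empty walk follows every single-vertex route). -/
def Follows (P : List (TimeArc V)) (R : List V) : Prop :=
  match P with
  | [] => ∃ v, R = [v]
  | e :: es => visits (e :: es) = R

/-- `R` is a `D`-traversal-delayed route: some `D`-traversal-delayed temporal walk follows `R`. -/
def IsTDRoute [DecidableEq V] (E D : Finset (TimeArc V)) (δ : ℕ) (R : List V) : Prop :=
  ∃ P : List (TimeArc V), IsTDWalk E D δ P ∧ Follows P R

/-- `R` is a `D`-starting-delayed route: some `D`-starting-delayed temporal walk follows `R`. -/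
def IsSDRoute [DecidableEq V] (E D : Finset (TimeArc V)) (δ : ℕ) (R : List V) : Prop :=
  ∃ P : List (TimeArc V), IsSDWalk E D δ P ∧ Follows P R

/-- `R` is `x`-traversal-delay-robust: it is a `D`-traversal-delayed route for every
`D ⊆ E` with `|D| ≤ x`. -/
def TDRobust [DecidableEq V] (E : Finset (TimeArc V)) (δ x : ℕ) (R : List V) : Prop :=
  ∀ D : Finset (TimeArc V), D ⊆ E → D.card ≤ x → IsTDRoute E D δ R

/-- `R` is `x`-starting-delay-robust: it is a `D`-starting-delayed route for every
`D ⊆ E` with `|D| ≤ x`. -/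
def SDRobust [DecidableEq V] (E : Finset (TimeArc V)) (δ x : ℕ) (R : List V) : Prop :=
  ∀ D : Finset (TimeArc V), D ⊆ E → D.card ≤ x → IsSDRoute E D δ R

/-- Earliest `D`-delayed arrival time of a route `R` (with traversal delays of `δ` on the
arcs of `D`): the minimum over all `D`-traversal-delayed temporal walks following `R` of the
delayed arrival time of the last arc; `⊤` (i.e. `∞`) if no such walk exists. -/
noncomputable def earliestArrival [DecidableEq V] (E D : Finset (TimeArc V)) (δ : ℕ)
    (R : List V) : ℕ∞ :=
  sInf {m : ℕ∞ | ∃ P : List (TimeArc V), IsTDWalk E D δ P ∧ Follows P R ∧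
    ∃ e : TimeArc V, P.getLast? = some e ∧
      m = ((e.time + e.trav + (if e ∈ D then δ else 0) : ℕ) : ℕ∞)}

/-- Worst-case arrival time of a route `R` for `y` delays: the maximum of the earliest
`D`-delayed arrival time over all `D ⊆ E` with `|D| ≤ y`; for a single-vertex route it is `0`. -/
noncomputable def worstArrival [DecidableEq V] (E : Finset (TimeArc V)) (δ : ℕ)
    (R : List V) (y : ℕ) : ℕ∞ :=
  if R.length ≤ 1 then 0
  else sSup {m : ℕ∞ | ∃ D : Finset (TimeArc V), D ⊆ E ∧ D.card ≤ y ∧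
    m = earliestArrival E D δ R}

/-- The function `arrival(v, w, t, y)`: worst-case single-step delayed arrival time from `v`
to `w` when starting at time `t` with up to `y` delays. It is `∞` if `t = ∞` or
`E(v,w,t) = ∅`; otherwise it equals `min (t(a₁)+λ(a₁)+δ) (t(a_{y+1})+λ(a_{y+1}))` where
`a₁, …, a_ℓ` lists `E(v,w,t)` in nondecreasing order of arrival time, the second term being
omitted if `ℓ ≤ y`. -/
noncomputable def arrivalFn [DecidableEq V] (E : Finset (TimeArc V)) (δ : ℕ) (v w : V)
    (t : ℕ∞) (y : ℕ) : ℕ∞ :=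
  if t = ⊤ then ⊤
  else
    let t0 : ℕ := WithTop.untopD 0 t
    let S : List ℕ :=
      ((E.filter (fun a => a.src = v ∧ a.dst = w ∧ t0 ≤ a.time)).val.map
        (fun a => a.time + a.trav)).sort (· ≤ ·)
    match S, S[y]? with
    | [], _ => ⊤
    | a :: _, some b => min ((a + δ : ℕ) : ℕ∞) ((b : ℕ) : ℕ∞)
    | a :: _, none => ((a + δ : ℕ) : ℕ∞)

/-- The dynamic-programming table, computed on the *reversed* route:
`dpRev E δ (Rⱼ.reverse) y` is the table entry `A_{Rⱼ}[y]`; the base case is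
`A_{R₁}[y] = 0` and `A_{Rᵢ}[y] = max_{0 ≤ y' ≤ y} arrival(v_{i-1}, v_i, A_{R_{i-1}}[y'], y - y')`. -/
noncomputable def dpRev [DecidableEq V] (E : Finset (TimeArc V)) (δ : ℕ) : List V → ℕ → ℕ∞
  | [], _ => 0
  | [_], _ => 0
  | w :: v :: rest, y =>
      (Finset.range (y + 1)).sup
        (fun y' => arrivalFn E δ v w (dpRev E δ (v :: rest) y') (y - y'))

namespace Aux8
open List
set_option linter.unusedSectionVars false

variable {V : Type} [DecidableEq V]

def arrD (D : Finset (TimeArc V)) (δ : ℕ) (e : TimeArc V) : ℕ :=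
  e.time + e.trav + (if e ∈ D then δ else 0)

def walksTo (E D : Finset (TimeArc V)) (δ : ℕ) (R : List V) : Set ℕ :=
  {n | ∃ P : List (TimeArc V), IsTDWalk E D δ P ∧ Follows P R ∧
    ∃ e : TimeArc V, P.getLast? = some e ∧ n = arrD D δ e}

lemma earliestArrival_eq (E D : Finset (TimeArc V)) (δ : ℕ) (R : List V) :
    earliestArrival E D δ R = sInf (Nat.cast '' walksTo E D δ R) := by
  unfold earliestArrival
  congr 1
  ext m
  constructor
  · rintro ⟨P, h1, h2, e, h3, rfl⟩
    exact ⟨arrD D δ e, ⟨P, h1, h2, e, h3, rfl⟩, rfl⟩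
  · rintro ⟨n, ⟨P, h1, h2, e, h3, rfl⟩, rfl⟩
    exact ⟨P, h1, h2, e, h3, rfl⟩

lemma visits_snoc (P : List (TimeArc V)) (hP : P ≠ []) (e : TimeArc V) :
    visits (P ++ [e]) = visits P ++ [e.dst] := by
  obtain ⟨f, P', rfl⟩ := List.exists_cons_of_ne_nil hP
  simp [visits]

lemma follows_visits {P : List (TimeArc V)} {Q : List V} (h : P ≠ []) (hF : Follows P Q) :
    visits P = Q := by
  cases P with
  | nil => exact absurd rfl h
  | cons f P' => exact hF

lemma follows_of_visits {P : List (TimeArc V)} {Q : List V} (h : P ≠ []) (hv : visits P = Q) :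
    Follows P Q := by
  cases P with
  | nil => exact absurd rfl h
  | cons f P' => exact hv

lemma follows_getLast {P : List (TimeArc V)} {Q : List V}
    (hF : Follows P Q) {g : TimeArc V} (hg : P.getLast? = some g) :
    Q.getLast? = some g.dst := by
  cases P with
  | nil => simp at hg
  | cons f P' =>
    have hv : visits (f :: P') = Q := hF
    subst hv
    show (f.src :: (f :: P').map TimeArc.dst).getLast? = some g.dst
    rw [List.map_cons, List.getLast?_cons_cons, ← List.map_cons, List.getLast?_map, hg]
    rfl

lemma chain'_imp_of_mem {α : Type*} {R S : α → α → Prop} :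
    ∀ {l : List α}, (∀ a ∈ l, ∀ b ∈ l, R a b → S a b) → l.Chain' R → l.Chain' S := by
  intro l
  induction l with
  | nil => intro _ _; simp [List.Chain']
  | cons a l ih =>
    intro h hc
    cases l with
    | nil => simp [List.Chain']
    | cons b l' =>
      unfold List.Chain' at hc ⊢; rw [List.isChain_cons_cons] at hc ⊢
      exact ⟨h a (by simp) b (by simp) hc.1,
        ih (fun x hx y hy => h x (by simp [hx]) y (by simp [hy])) hc.2⟩

lemma isTDWalk_congr {E D D' : Finset (TimeArc V)} {δ : ℕ} {P : List (TimeArc V)}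
    (h : ∀ a ∈ P, (a ∈ D ↔ a ∈ D')) (hW : IsTDWalk E D δ P) : IsTDWalk E D' δ P := by
  refine ⟨hW.1, chain'_imp_of_mem (fun a ha b _ hr => ?_) hW.2⟩
  refine ⟨hr.1, ?_⟩
  have : (if a ∈ D then δ else 0) = (if a ∈ D' then δ else 0) := if_congr (h a ha) rfl rfl
  rw [← this]
  exact hr.2

lemma arrD_mono {D₁ D₂ : Finset (TimeArc V)} (h : D₁ ⊆ D₂) (δ : ℕ) (e : TimeArc V) :
    arrD D₁ δ e ≤ arrD D₂ δ e := by
  unfold arrD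
  by_cases h1 : e ∈ D₁
  · rw [if_pos h1, if_pos (h h1)]
  · rw [if_neg h1]
    exact Nat.add_le_add_left (Nat.zero_le _) _

lemma walksTo_anti {E D₁ D₂ : Finset (TimeArc V)} {δ : ℕ} (h : D₁ ⊆ D₂) {R : List V} {n : ℕ}
    (hn : n ∈ walksTo E D₂ δ R) : ∃ m ∈ walksTo E D₁ δ R, m ≤ n := by
  obtain ⟨P, hW, hF, e, he, rfl⟩ := hn
  refine ⟨arrD D₁ δ e, ⟨P, ⟨hW.1, ?_⟩, hF, e, he, rfl⟩, arrD_mono h δ e⟩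
  exact hW.2.imp (fun {a b} hab => ⟨hab.1, le_trans (arrD_mono h δ a) hab.2⟩)

lemma mem_walk_le {D : Finset (TimeArc V)} {δ : ℕ} :
    ∀ {P : List (TimeArc V)},
      P.Chain' (fun e f => f.src = e.dst ∧ e.time + e.trav + (if e ∈ D then δ else 0) ≤ f.time) →
      ∀ {g}, P.getLast? = some g → ∀ {a}, a ∈ P → a.time + a.trav ≤ arrD D δ g := by
  intro P
  induction P with
  | nil => intro _ g hg; simp at hg
  | cons e P' ih =>
    intro hC g hg a ha
    cases P' with
    | nil =>
      simp at hg ha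
      subst hg; subst ha
      exact Nat.le_add_right _ _
    | cons f rest =>
      unfold List.Chain' at hC; rw [List.isChain_cons_cons] at hC
      have hg' : (f :: rest).getLast? = some g := by rwa [List.getLast?_cons_cons] at hg
      rcases List.mem_cons.mp ha with rfl | ha'
      · have h0 : a.time + a.trav ≤ a.time + a.trav + (if a ∈ D then δ else 0) :=
          Nat.le_add_right _ _
        have h1 : a.time + a.trav + (if a ∈ D then δ else 0) ≤ f.time := hC.1.2
        have h2 : f.time + f.trav ≤ arrD D δ g := ih hC.2 hg' (List.mem_cons_self (a := f) (l := rest))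
        omega
      · exact ih hC.2 hg' ha'

lemma walksTo_single (E D : Finset (TimeArc V)) (δ : ℕ) (v : V) :
    walksTo E D δ [v] = ∅ := by
  ext n
  simp only [Set.mem_empty_iff_false, iff_false]
  rintro ⟨P, _, hF, e, he, _⟩
  cases P with
  | nil => simp at he
  | cons f P' =>
    have : visits (f :: P') = [v] := hF
    have hlen := congrArg List.length this
    simp [visits] at hlen

lemma walksTo_snoc (E D : Finset (TimeArc V)) (δ : ℕ) {Q : List V} (hQ : Q ≠ []) {v : V}
    (hv : Q.getLast? = some v) (w : V) (n : ℕ) :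
    n ∈ walksTo E D δ (Q ++ [w]) ↔
      ∃ e : TimeArc V, e ∈ E ∧ e.src = v ∧ e.dst = w ∧ n = arrD D δ e ∧
        (Q.length = 1 ∨ ∃ m ∈ walksTo E D δ Q, m ≤ e.time) := by
  constructor
  · rintro ⟨P, hW, hF, e, hg, rfl⟩
    have hPne : P ≠ [] := by rintro rfl; simp at hg
    obtain ⟨P', rfl⟩ : ∃ P', P = P' ++ [e] := by
      refine ⟨P.dropLast, ?_⟩
      conv_lhs => rw [← List.dropLast_append_getLast hPne]
      rw [List.getLast?_eq_getLast hPne, Option.some_inj] at hg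
      rw [hg]
    have hWsplit := hW.2
    unfold List.Chain' at hWsplit; rw [List.isChain_append] at hWsplit
    obtain ⟨hC1, -, hlink⟩ := hWsplit
    have heE : e ∈ E := hW.1 e (by simp)
    cases P' with
    | nil =>
      have hvv : ([e.src, e.dst] : List V) = Q ++ [w] := by
        have : visits [e] = Q ++ [w] := hF
        simpa [visits] using this
      obtain ⟨q, Q', rfl⟩ := List.exists_cons_of_ne_nil hQ
      cases Q' with
      | nil =>
        have h12 : e.src = q ∧ e.dst = w := by
          have h' : ([e.src, e.dst] : List V) = [q, w] := hvv
          simpa using h'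
        have hqv : q = v := by simpa using hv
        exact ⟨e, heE, by rw [h12.1, hqv], h12.2, rfl, Or.inl rfl⟩
      | cons q2 Q'' =>
        have h2 := congrArg List.length hvv
        simp only [List.length_cons, List.length_append, List.length_nil] at h2
        omega
    | cons f P'' =>
      have hfne : (f :: P'') ≠ [] := by simp
      have hvis : visits ((f :: P'') ++ [e]) = Q ++ [w] := hF
      rw [visits_snoc _ hfne] at hvis
      have hvq : visits (f :: P'') = Q ∧ e.dst = w := by
        have := List.append_inj' hvis rfl
        exact ⟨this.1, by simpa using this.2⟩
      have hF' : Follows (f :: P'') Q := hvq.1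
      obtain ⟨g, hg'⟩ : ∃ g, (f :: P'').getLast? = some g :=
        ⟨(f :: P'').getLast hfne, List.getLast?_eq_getLast hfne⟩
      have hgd : Q.getLast? = some g.dst := follows_getLast hF' hg'
      have hlink' := hlink g (by rw [hg']; rfl) e rfl
      refine ⟨e, heE, ?_, hvq.2, rfl, Or.inr ⟨arrD D δ g,
        ⟨f :: P'', ⟨fun a ha => hW.1 a (List.mem_append_left _ ha), hC1⟩, hF', g, hg', rfl⟩,
        hlink'.2⟩⟩
      rw [hlink'.1]
      rw [hv] at hgd
      exact (Option.some_inj.mp hgd).symm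
  · rintro ⟨e, heE, hsrc, hdst, rfl, hcase⟩
    rcases hcase with h1 | ⟨m, ⟨P', hW', hF', g, hg', rfl⟩, hm⟩
    · obtain ⟨q, rfl⟩ := List.length_eq_one_iff.mp h1
      have hqv : q = v := by simpa using hv
      refine ⟨[e], ⟨by simpa using heE, by simp [List.Chain']⟩, ?_, e, rfl, rfl⟩
      show visits [e] = [q] ++ [w]
      simp [visits, hsrc, hdst, hqv]
    · have hP'ne : P' ≠ [] := by rintro rfl; simp at hg'
      have hgd : Q.getLast? = some g.dst := follows_getLast hF' hg'
      have hgv : g.dst = v := by rw [hv] at hgd; exact (Option.some_inj.mp hgd).symm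
      refine ⟨P' ++ [e], ⟨?_, ?_⟩, ?_, e, ?_, rfl⟩
      · intro a ha
        rcases List.mem_append.mp ha with h | h
        · exact hW'.1 a h
        · simp at h; subst h; exact heE
      · unfold List.Chain'; rw [List.isChain_append]
        refine ⟨hW'.2, List.isChain_singleton e, ?_⟩
        intro x hx y hy
        simp at hy
        subst hy
        rw [hg'] at hx
        simp at hx
        subst hx
        exact ⟨by rw [hsrc, hgv], hm⟩
      · exact follows_of_visits (by simp) (by rw [visits_snoc P' hP'ne, follows_visits hP'ne hF', hdst])
      · rw [List.getLast?_concat]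
end Aux8
namespace Aux8
set_option linter.unusedSectionVars false
variable {V : Type} [DecidableEq V]

noncomputable def preA (E D : Finset (TimeArc V)) (δ : ℕ) (Q : List V) : ℕ∞ :=
  if Q.length ≤ 1 then 0 else earliestArrival E D δ Q

lemma length_one_of_le {Q : List V} (hQ : Q ≠ []) (h : Q.length ≤ 1) : Q.length = 1 := by
  cases Q with
  | nil => exact absurd rfl hQ
  | cons a l => simp only [List.length_cons] at h ⊢; omega

lemma preA_le_iff {E D : Finset (TimeArc V)} {δ : ℕ} {Q : List V} (hQ : Q ≠ []) {t : ℕ} :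
    preA E D δ Q ≤ (t : ℕ∞) ↔ (Q.length = 1 ∨ ∃ m ∈ walksTo E D δ Q, m ≤ t) := by
  by_cases h1 : Q.length ≤ 1
  · simp [preA, h1, length_one_of_le hQ h1]
  · rw [preA, if_neg h1, earliestArrival_eq]
    constructor
    · intro h
      right
      have hne : ((Nat.cast : ℕ → ℕ∞) '' walksTo E D δ Q).Nonempty := by
        by_contra hc
        rw [Set.not_nonempty_iff_eq_empty] at hc
        rw [hc, sInf_empty, top_le_iff] at h
        exact (ENat.coe_ne_top t) h
      obtain ⟨m0, hm0, heq⟩ := csInf_mem hne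
      refine ⟨m0, hm0, ?_⟩
      have h2 : (m0 : ℕ∞) ≤ (t : ℕ∞) := heq.le.trans h
      exact_mod_cast h2
    · rintro (h | ⟨m, hm, hmt⟩)
      · exact absurd (by omega : Q.length ≤ 1) h1
      · exact le_trans (sInf_le ⟨m, hm, rfl⟩) (by exact_mod_cast hmt)

lemma preA_anti {E D₁ D₂ : Finset (TimeArc V)} {δ : ℕ} (h : D₁ ⊆ D₂) (Q : List V) :
    preA E D₁ δ Q ≤ preA E D₂ δ Q := by
  by_cases h1 : Q.length ≤ 1
  · simp [preA, h1]
  · rw [preA, if_neg h1, preA, if_neg h1, earliestArrival_eq, earliestArrival_eq]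
    apply le_sInf
    rintro b ⟨n, hn, rfl⟩
    obtain ⟨m, hm, hmn⟩ := walksTo_anti h hn
    exact le_trans (sInf_le ⟨m, hm, rfl⟩) (by exact_mod_cast hmn)

lemma ea_snoc (E D : Finset (TimeArc V)) (δ : ℕ) {Q : List V} (hQ : Q ≠ []) {v : V}
    (hv : Q.getLast? = some v) (w : V) :
    earliestArrival E D δ (Q ++ [w]) =
      sInf ((fun e => ((arrD D δ e : ℕ) : ℕ∞)) ''
        {e : TimeArc V | e ∈ E ∧ e.src = v ∧ e.dst = w ∧ preA E D δ Q ≤ (e.time : ℕ∞)}) := by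
  rw [earliestArrival_eq]
  congr 1
  ext m
  simp only [Set.mem_image, Set.mem_setOf_eq]
  constructor
  · rintro ⟨n, hn, rfl⟩
    rw [walksTo_snoc E D δ hQ hv w n] at hn
    obtain ⟨e, he, h2, h3, rfl, h5⟩ := hn
    exact ⟨e, ⟨he, h2, h3, (preA_le_iff hQ).2 h5⟩, rfl⟩
  · rintro ⟨e, ⟨he, h2, h3, h4⟩, rfl⟩
    exact ⟨arrD D δ e, (walksTo_snoc E D δ hQ hv w _).2
      ⟨e, he, h2, h3, rfl, (preA_le_iff hQ).1 h4⟩, rfl⟩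

def preSet (E : Finset (TimeArc V)) (δ : ℕ) (Q : List V) (y : ℕ) : Set ℕ∞ :=
  {m | ∃ D : Finset (TimeArc V), D ⊆ E ∧ D.card ≤ y ∧ m = preA E D δ Q}

lemma worstArrival_eq_preSet (E : Finset (TimeArc V)) (δ : ℕ) (Q : List V) (y : ℕ) :
    worstArrival E δ Q y = sSup (preSet E δ Q y) := by
  by_cases h : Q.length ≤ 1
  · rw [worstArrival, if_pos h]
    have hset : preSet E δ Q y = {0} := by
      ext m
      simp only [preSet, Set.mem_setOf_eq, Set.mem_singleton_iff]
      constructor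
      · rintro ⟨D, _, _, rfl⟩; rw [preA, if_pos h]
      · rintro rfl; exact ⟨∅, by simp [preA, if_pos h]⟩
    rw [hset, sSup_singleton]
  · rw [worstArrival, if_neg h]
    congr 1
    ext m
    simp only [preSet, Set.mem_setOf_eq, preA, if_neg h]

lemma exists_preA_eq_worst (E : Finset (TimeArc V)) (δ : ℕ) (Q : List V) (y : ℕ) :
    ∃ D : Finset (TimeArc V), D ⊆ E ∧ D.card ≤ y ∧ preA E D δ Q = worstArrival E δ Q y := by
  have hfin : (preSet E δ Q y).Finite := by
    have hsub : preSet E δ Q y ⊆ (fun D => preA E D δ Q) '' {D : Finset (TimeArc V) | D ⊆ E} := by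
      rintro m ⟨D, h1, h2, rfl⟩; exact ⟨D, h1, rfl⟩
    refine Set.Finite.subset (Set.Finite.image _ ?_) hsub
    refine Set.Finite.subset E.powerset.finite_toSet ?_
    intro D hD
    simpa [Finset.mem_powerset] using hD
  have hne : (preSet E δ Q y).Nonempty := ⟨preA E ∅ δ Q, ∅, by simp⟩
  have hmem := hne.csSup_mem hfin
  rw [worstArrival_eq_preSet]
  obtain ⟨D, h1, h2, heq⟩ := hmem
  exact ⟨D, h1, h2, heq.symm⟩

lemma preA_le_worst {E D : Finset (TimeArc V)} {δ : ℕ} {Q : List V} {y : ℕ}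
    (hDE : D ⊆ E) (hc : D.card ≤ y) : preA E D δ Q ≤ worstArrival E δ Q y := by
  rw [worstArrival_eq_preSet]
  exact le_sSup ⟨D, hDE, hc, rfl⟩

end Aux8
namespace Aux8
open List
set_option linter.unusedSectionVars false
variable {V : Type} [DecidableEq V]

noncomputable def sortedL (E : Finset (TimeArc V)) (v w : V) (t0 : ℕ) : List ℕ :=
  ((E.filter (fun a => a.src = v ∧ a.dst = w ∧ t0 ≤ a.time)).val.map
    (fun a => a.time + a.trav)).sort (· ≤ ·)

noncomputable def myArr (δ : ℕ) (L : List ℕ) (y : ℕ) : ℕ∞ :=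
  match L, L[y]? with
  | [], _ => ⊤
  | a :: _, some b => min ((a + δ : ℕ) : ℕ∞) ((b : ℕ) : ℕ∞)
  | a :: _, none => ((a + δ : ℕ) : ℕ∞)

lemma arrivalFn_def (E : Finset (TimeArc V)) (δ : ℕ) (v w : V) (t : ℕ∞) (y : ℕ) :
    arrivalFn E δ v w t y = if t = ⊤ then ⊤ else myArr δ (sortedL E v w (WithTop.untopD 0 t)) y := rfl

lemma arrivalFn_coe (E : Finset (TimeArc V)) (δ : ℕ) (v w : V) (t0 y : ℕ) :
    arrivalFn E δ v w (t0 : ℕ∞) y = myArr δ (sortedL E v w t0) y := by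
  rw [arrivalFn_def, if_neg (by exact_mod_cast WithTop.coe_ne_top)]
  rfl

lemma myArr_nil (δ y : ℕ) : myArr δ ([] : List ℕ) y = ⊤ := rfl

lemma myArr_eq {L : List ℕ} (h : L ≠ []) (δ y : ℕ) :
    myArr δ L y = if hy : y < L.length
      then min ((L.head h + δ : ℕ) : ℕ∞) ((L[y] : ℕ) : ℕ∞)
      else ((L.head h + δ : ℕ) : ℕ∞) := by
  obtain ⟨a, tl, rfl⟩ := List.exists_cons_of_ne_nil h
  by_cases hy : y < (a :: tl).length
  · rw [dif_pos hy]
    have h2 : (a :: tl)[y]? = some ((a :: tl)[y]) := List.getElem?_eq_getElem hy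
    unfold myArr
    rw [h2]
    simp
  · rw [dif_neg hy]
    have h2 : (a :: tl)[y]? = none := List.getElem?_eq_none (by omega)
    unfold myArr
    rw [h2]
    simp

lemma myArr_le_head {L : List ℕ} (h : L ≠ []) (δ y : ℕ) :
    myArr δ L y ≤ ((L.head h + δ : ℕ) : ℕ∞) := by
  rw [myArr_eq h]
  split
  · exact min_le_left _ _
  · exact le_refl _

lemma myArr_le_getElem {L : List ℕ} (δ y : ℕ) (hy : y < L.length) :
    myArr δ L y ≤ ((L[y] : ℕ) : ℕ∞) := by
  have h : L ≠ [] := by rintro rfl; simp at hy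
  rw [myArr_eq h, dif_pos hy]
  exact min_le_right _ _

lemma sorted_getElem_le {L : List ℕ} (hs : L.Pairwise (· ≤ ·)) {i j : ℕ} (hij : i ≤ j)
    (hj : j < L.length) : L[i]'(lt_of_le_of_lt hij hj) ≤ L[j] := by
  rcases eq_or_lt_of_le hij with rfl | h
  · exact le_refl _
  · exact List.pairwise_iff_getElem.mp hs i j _ hj h

lemma head_le_of_sorted {L : List ℕ} (hs : L.Pairwise (· ≤ ·)) (h : L ≠ []) {x : ℕ}
    (hx : x ∈ L) : L.head h ≤ x := by
  obtain ⟨a, tl, rfl⟩ := List.exists_cons_of_ne_nil h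
  rw [List.pairwise_cons] at hs
  rcases List.mem_cons.mp hx with rfl | hx'
  · exact le_refl _
  · exact hs.1 x hx'

lemma sublist_getElem_ge {l' l : List ℕ} (h : l' <+ l) :
    l.Pairwise (· ≤ ·) → ∀ i (hi : i < l'.length), l[i]'(lt_of_lt_of_le hi h.length_le) ≤ l'[i] := by
  induction h with
  | slnil => intro _ i hi; simp at hi
  | @cons l₁ l₂ a h ih =>
    intro hs i hi
    have hs2 : l₂.Pairwise (· ≤ ·) := (List.pairwise_cons.mp hs).2
    cases i with
    | zero =>
      exact (List.pairwise_cons.mp hs).1 _ (h.subset (List.getElem_mem _))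
    | succ j =>
      have hj2 : j + 1 < l₂.length := lt_of_lt_of_le hi h.length_le
      simp only [List.getElem_cons_succ]
      calc l₂[j]'(by omega) ≤ l₂[j+1] := sorted_getElem_le hs2 (by omega) hj2
        _ ≤ l₁[j+1] := ih hs2 (j+1) hi
  | @cons_cons l₁ l₂ a h ih =>
    intro hs i hi
    have hs2 : l₂.Pairwise (· ≤ ·) := (List.pairwise_cons.mp hs).2
    cases i with
    | zero => simp
    | succ j =>
      simp only [List.getElem_cons_succ]
      exact ih hs2 j (by simpa using hi)

lemma sort_sublist {s t : Multiset ℕ} (h : s ≤ t) :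
    s.sort (· ≤ ·) <+ t.sort (· ≤ ·) := by
  have h1 : (↑(s.sort (· ≤ ·)) : Multiset ℕ) ≤ ↑(t.sort (· ≤ ·)) := by
    rw [Multiset.sort_eq, Multiset.sort_eq]; exact h
  rw [Multiset.coe_le] at h1
  obtain ⟨l, hperm, hsub⟩ := h1
  have hls : l.Pairwise (· ≤ ·) := List.Pairwise.sublist hsub (Multiset.pairwise_sort _ _)
  have heq : l = s.sort (· ≤ ·) :=
    List.Perm.eq_of_pairwise' hls (Multiset.pairwise_sort _ _) hperm
  rwa [← heq]

lemma sortedL_sorted (E : Finset (TimeArc V)) (v w : V) (t0 : ℕ) :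
    (sortedL E v w t0).Pairwise (· ≤ ·) := Multiset.pairwise_sort _ _

lemma sortedL_sublist (E : Finset (TimeArc V)) (v w : V) {t0 t0' : ℕ} (h : t0 ≤ t0') :
    sortedL E v w t0' <+ sortedL E v w t0 := by
  apply sort_sublist
  apply Multiset.map_le_map
  rw [Finset.filter_val, Finset.filter_val]
  exact Multiset.monotone_filter_right _ (fun a ha => ⟨ha.1, ha.2.1, le_trans h ha.2.2⟩)

lemma mem_sortedL {E : Finset (TimeArc V)} {v w : V} {t0 n : ℕ} :
    n ∈ sortedL E v w t0 ↔
      ∃ e ∈ E.filter (fun a => a.src = v ∧ a.dst = w ∧ t0 ≤ a.time), e.time + e.trav = n := by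
  rw [sortedL, Multiset.mem_sort, Multiset.mem_map]
  constructor
  · rintro ⟨e, he, rfl⟩; exact ⟨e, Finset.mem_val.mp he, rfl⟩
  · rintro ⟨e, he, rfl⟩; exact ⟨e, Finset.mem_val.mpr he, rfl⟩

lemma myArr_mono {L L' : List ℕ} (hsub : L' <+ L) (hs : L.Pairwise (· ≤ ·)) {y y' : ℕ}
    (hy : y ≤ y') (δ : ℕ) : myArr δ L y ≤ myArr δ L' y' := by
  rcases eq_or_ne L' [] with rfl | hL'
  · rw [myArr_nil]; exact le_top
  have hL : L ≠ [] := by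
    rintro rfl
    exact hL' (List.sublist_nil.mp hsub)
  have hhead : L.head hL ≤ L'.head hL' :=
    head_le_of_sorted hs hL (hsub.subset (List.head_mem hL'))
  by_cases hy' : y' < L'.length
  · have hy'L : y' < L.length := lt_of_lt_of_le hy' hsub.length_le
    have hyL : y < L.length := lt_of_le_of_lt hy hy'L
    rw [myArr_eq hL' δ y', dif_pos hy', myArr_eq hL δ y, dif_pos hyL]
    apply min_le_min
    · exact_mod_cast Nat.add_le_add_right hhead δ
    · exact_mod_cast le_trans (sorted_getElem_le hs hy hy'L) (sublist_getElem_ge hsub hs y' hy')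
  · rw [myArr_eq hL' δ y', dif_neg hy']
    exact le_trans (myArr_le_head hL δ y) (by exact_mod_cast Nat.add_le_add_right hhead δ)

lemma arrivalFn_mono (E : Finset (TimeArc V)) (δ : ℕ) (v w : V) {t t' : ℕ∞} (ht : t ≤ t')
    {y y' : ℕ} (hy : y ≤ y') : arrivalFn E δ v w t y ≤ arrivalFn E δ v w t' y' := by
  rcases eq_or_ne t' ⊤ with rfl | h'
  · have htop : arrivalFn E δ v w ⊤ y' = ⊤ := by rw [arrivalFn_def]; simp
    rw [htop]; exact le_top
  have h : t ≠ ⊤ := fun ht0 => h' (top_le_iff.mp (ht0 ▸ ht))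
  lift t to ℕ using h
  lift t' to ℕ using h'
  rw [arrivalFn_coe, arrivalFn_coe]
  exact myArr_mono (sortedL_sublist E v w (by exact_mod_cast ht)) (sortedL_sorted E v w _) hy δ

lemma sortedL_spec (E : Finset (TimeArc V)) (v w : V) (t0 : ℕ) :
    ∃ l : List (TimeArc V), l.Nodup ∧
      (∀ e, e ∈ l ↔ e ∈ E.filter (fun a => a.src = v ∧ a.dst = w ∧ t0 ≤ a.time)) ∧
      sortedL E v w t0 = l.map (fun e => e.time + e.trav) ∧
      l.Pairwise (fun a b => a.time + a.trav ≤ b.time + b.trav) := by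
  classical
  set S := E.filter (fun a => a.src = v ∧ a.dst = w ∧ t0 ≤ a.time) with hS
  let r : TimeArc V → TimeArc V → Prop := fun a b => a.time + a.trav ≤ b.time + b.trav
  haveI : DecidableRel r := fun a b => inferInstanceAs (Decidable (_ ≤ _))
  haveI : IsTotal (TimeArc V) r := ⟨fun a b => le_total _ _⟩
  haveI : IsTrans (TimeArc V) r := ⟨fun a b c hab hbc => le_trans hab hbc⟩
  refine ⟨List.insertionSort r S.toList, ?_, ?_, ?_, List.pairwise_insertionSort r _⟩
  · exact (List.perm_insertionSort r _).nodup_iff.mpr S.nodup_toList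
  · intro e
    rw [(List.perm_insertionSort r _).mem_iff, Finset.mem_toList]
  · refine List.Perm.eq_of_pairwise' (r := (· ≤ ·)) ?_ ?_ ?_; rotate_right
    · rw [← Multiset.coe_eq_coe]
      have h1 : (↑(sortedL E v w t0) : Multiset ℕ) = S.val.map (fun e => e.time + e.trav) := by
        rw [sortedL, Multiset.sort_eq]
      have h2 : (↑((List.insertionSort r S.toList).map (fun e => e.time + e.trav)) : Multiset ℕ)
          = S.val.map (fun e => e.time + e.trav) := by
        rw [← Multiset.map_coe]
        congr 1
        rw [Multiset.coe_eq_coe.mpr (List.perm_insertionSort r _), Finset.coe_toList]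
      rw [h1, h2]
    · exact sortedL_sorted E v w t0
    · exact List.Pairwise.map _ (fun a b hab => hab) (List.pairwise_insertionSort r _)

end Aux8
namespace Aux8
open List
set_option linter.unusedSectionVars false
variable {V : Type} [DecidableEq V]

lemma exists_F (E : Finset (TimeArc V)) (v w : V) (t0 k : ℕ) :
    ∃ F : Finset (TimeArc V),
      F ⊆ E.filter (fun a => a.src = v ∧ a.dst = w ∧ t0 ≤ a.time) ∧ F.card ≤ k ∧
      ∀ e ∈ E.filter (fun a => a.src = v ∧ a.dst = w ∧ t0 ≤ a.time), e ∉ F →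
        ∃ hk : k < (sortedL E v w t0).length, (sortedL E v w t0)[k] ≤ e.time + e.trav := by
  obtain ⟨l, hnd, hmem, hL, hsort⟩ := sortedL_spec E v w t0
  refine ⟨(l.take k).toFinset, ?_, ?_, ?_⟩
  · intro e he
    rw [List.mem_toFinset] at he
    exact (hmem e).1 (List.mem_of_mem_take he)
  · calc (l.take k).toFinset.card ≤ (l.take k).length := List.toFinset_card_le _
      _ ≤ k := by rw [List.length_take]; omega
  · intro e heS heF
    have hel : e ∈ l := (hmem e).2 heS
    have hdrop : e ∈ l.drop k := by
      have h2 : e ∈ l.take k ++ l.drop k := by rw [List.take_append_drop]; exact hel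
      rcases List.mem_append.mp h2 with h3 | h3
      · exact absurd (List.mem_toFinset.mpr h3) heF
      · exact h3
    obtain ⟨j, hj, hje⟩ := List.getElem_of_mem hdrop
    have hkj : k + j < l.length := by
      rw [List.length_drop] at hj; omega
    have hkl : k < l.length := by omega
    have hLlen : (sortedL E v w t0).length = l.length := by rw [hL, List.length_map]
    refine ⟨by omega, ?_⟩
    have hgete : l[k + j]'hkj = e := by rw [← hje, List.getElem_drop]
    have hle : l[k].time + l[k].trav ≤ (l[k+j]'hkj).time + (l[k+j]'hkj).trav := by
      rcases Nat.eq_or_lt_of_le (Nat.le_add_right k j) with heq | hlt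
      · simp_rw [← heq]; exact le_rfl
      · exact List.pairwise_iff_getElem.mp hsort k (k+j) hkl hkj hlt
    rw [hgete] at hle
    have hgetL : (sortedL E v w t0)[k]'(by omega) = l[k].time + l[k].trav := by
      simp_rw [hL]
      rw [List.getElem_map]
    rw [hgetL]
    exact hle

lemma exists_undelayed (E : Finset (TimeArc V)) (v w : V) (t0 : ℕ) (D : Finset (TimeArc V))
    (hk : (D ∩ E.filter (fun a => a.src = v ∧ a.dst = w ∧ t0 ≤ a.time)).card
      < (sortedL E v w t0).length) :
    ∃ e ∈ E.filter (fun a => a.src = v ∧ a.dst = w ∧ t0 ≤ a.time), e ∉ D ∧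
      e.time + e.trav ≤ (sortedL E v w t0)[(D ∩ E.filter
        (fun a => a.src = v ∧ a.dst = w ∧ t0 ≤ a.time)).card]'hk := by
  classical
  obtain ⟨l, hnd, hmem, hL, hsort⟩ := sortedL_spec E v w t0
  set S := E.filter (fun a => a.src = v ∧ a.dst = w ∧ t0 ≤ a.time) with hS
  set y₂ := (D ∩ S).card with hy₂
  have hLlen : (sortedL E v w t0).length = l.length := by rw [hL, List.length_map]
  have hyl : y₂ < l.length := by omega
  have hex : ∃ e ∈ l.take (y₂ + 1), e ∉ D := by
    by_contra hc
    push_neg at hc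
    have hsub : (l.take (y₂ + 1)).toFinset ⊆ D ∩ S := by
      intro e he
      rw [List.mem_toFinset] at he
      exact Finset.mem_inter.mpr ⟨hc e he, (hmem e).1 (List.mem_of_mem_take he)⟩
    have hcard : (l.take (y₂ + 1)).toFinset.card = y₂ + 1 := by
      rw [List.toFinset_card_of_nodup (hnd.sublist (List.take_sublist _ _))]
      rw [List.length_take]
      omega
    have := Finset.card_le_card hsub
    rw [hcard] at this
    omega
  obtain ⟨e, hetake, heD⟩ := hex
  obtain ⟨j, hj, hje⟩ := List.getElem_of_mem hetake
  have hjlen : j < l.length := by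
    rw [List.length_take] at hj; omega
  have hjy : j ≤ y₂ := by
    rw [List.length_take] at hj; omega
  have hgete : l[j] = e := by rw [← hje, List.getElem_take]
  refine ⟨e, (hmem e).1 (List.mem_of_mem_take hetake), heD, ?_⟩
  have hgetL : (sortedL E v w t0)[y₂]'hk = l[y₂].time + l[y₂].trav := by
    simp_rw [hL]
    rw [List.getElem_map]
  rw [hgetL, ← hgete]
  rcases Nat.eq_or_lt_of_le hjy with heq | hlt
  · simp_rw [heq]; exact le_rfl
  · exact List.pairwise_iff_getElem.mp hsort j y₂ hjlen hyl hlt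

lemma ea_snoc_top {E D : Finset (TimeArc V)} {δ : ℕ} {Q : List V} (hQ : Q ≠ []) {v : V}
    (hv : Q.getLast? = some v) (w : V)
    (h : ∀ e : TimeArc V, e ∈ E → e.src = v → e.dst = w → ¬ preA E D δ Q ≤ (e.time : ℕ∞)) :
    earliestArrival E D δ (Q ++ [w]) = ⊤ := by
  rw [ea_snoc E D δ hQ hv w]
  refine (congrArg sInf (?_ : _ = (∅ : Set ℕ∞))).trans sInf_empty
  rw [Set.image_eq_empty]
  ext e
  simp only [Set.mem_setOf_eq, Set.mem_empty_iff_false, iff_false, not_and]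
  intro h1 h2 h3
  exact h e h1 h2 h3

end Aux8
namespace Aux8
open List
set_option linter.unusedSectionVars false
variable {V : Type} [DecidableEq V]

lemma mem_of_getLast? {α : Type*} {l : List α} {a : α} (h : l.getLast? = some a) : a ∈ l := by
  obtain ⟨hne, heq⟩ := List.mem_getLast?_eq_getLast (Option.mem_def.mpr h)
  rw [heq]
  exact List.getLast_mem hne

lemma step (E : Finset (TimeArc V)) (δ : ℕ) {Q : List V} (hQ : Q ≠ []) {v : V}
    (hv : Q.getLast? = some v) (w : V) (y : ℕ) :
    worstArrival E δ (Q ++ [w]) y =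
      (Finset.range (y + 1)).sup
        (fun y' => arrivalFn E δ v w (worstArrival E δ Q y') (y - y')) := by
  have hlen2 : ¬ (Q ++ [w]).length ≤ 1 := by
    rw [List.length_append]
    cases Q with
    | nil => exact absurd rfl hQ
    | cons a l => simp
  have hpre : ∀ D : Finset (TimeArc V),
      preA E D δ (Q ++ [w]) = earliestArrival E D δ (Q ++ [w]) := fun D => by
    simp only [preA, if_neg hlen2]
  apply _root_.le_antisymm
  · rw [worstArrival_eq_preSet]
    apply sSup_le
    rintro m ⟨D, hDE, hDy, rfl⟩
    rw [hpre D]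
    rcases eq_or_ne (preA E D δ Q) ⊤ with htop | hfin
    · have hDcr : D.card ∈ Finset.range (y + 1) := Finset.mem_range.mpr (by omega)
      refine le_trans ?_ (Finset.le_sup hDcr)
      have hwtop : worstArrival E δ Q D.card = ⊤ :=
        top_le_iff.mp (htop ▸ preA_le_worst hDE (le_refl _))
      rw [hwtop, arrivalFn_def, if_pos rfl]
      exact le_top
    · obtain ⟨t0, ht0'⟩ := WithTop.ne_top_iff_exists.mp hfin
      have ht0 : preA E D δ Q = (t0 : ℕ∞) := ht0'.symm
      set S := E.filter (fun a => a.src = v ∧ a.dst = w ∧ t0 ≤ a.time) with hS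
      set D₁ := D \ S with hD1
      have hcards : D₁.card + (D ∩ S).card = D.card := Finset.card_sdiff_add_card_inter D S
      have hsub1 : D₁ ⊆ D := hD1 ▸ Finset.sdiff_subset
      have hc1 : D₁.card + (D ∩ S).card ≤ y := by rw [hcards]; exact hDy
      -- Claim 1
      have claim1 : preA E D δ Q ≤ preA E D₁ δ Q := by
        by_cases hQ1 : Q.length ≤ 1
        · simp only [preA, if_pos hQ1]; exact le_rfl
        · have key : ∀ m ∈ walksTo E D₁ δ Q, preA E D δ Q ≤ (m : ℕ∞) := by
          -- see below
            intro m hm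
            by_contra hcon
            push_neg at hcon
            have hmt0 : m < t0 := by
              rw [ht0] at hcon
              exact_mod_cast hcon
            obtain ⟨P, hW, hF, g, hg, rfl⟩ := hm
            have hbound : ∀ a ∈ P, a.time + a.trav ≤ arrD D₁ δ g :=
              fun a ha => mem_walk_le hW.2 hg ha
            have hiff : ∀ a ∈ P, (a ∈ D₁ ↔ a ∈ D) := by
              intro a ha
              constructor
              · intro h; exact (Finset.mem_sdiff.mp h).1
              · intro h
                rw [hD1, Finset.mem_sdiff]
                refine ⟨h, fun hSa => ?_⟩
                have h1 : t0 ≤ a.time := (Finset.mem_filter.mp hSa).2.2.2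
                have h2 := hbound a ha
                omega
            have hgP : g ∈ P := mem_of_getLast? hg
            have harr : arrD D₁ δ g = arrD D δ g := by
              unfold arrD
              rw [if_congr (hiff g hgP) rfl rfl]
            have hmem' : arrD D₁ δ g ∈ walksTo E D δ Q :=
              ⟨P, isTDWalk_congr hiff hW, hF, g, hg, harr⟩
            have hle : preA E D δ Q ≤ ((arrD D₁ δ g : ℕ) : ℕ∞) := by
              rw [preA, if_neg hQ1, earliestArrival_eq]
              exact sInf_le ⟨_, hmem', rfl⟩
            exact absurd hcon (not_lt.mpr hle)
          conv_rhs => rw [preA, if_neg hQ1, earliestArrival_eq]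
          apply le_sInf
          rintro b ⟨m, hm, rfl⟩
          exact key m hm
      -- Claim 2
      have claim2 : earliestArrival E D δ (Q ++ [w]) ≤
          arrivalFn E δ v w (preA E D δ Q) ((D ∩ S).card) := by
        rw [ht0, arrivalFn_coe]
        by_cases hL : sortedL E v w t0 = []
        · rw [hL, myArr_nil]; exact le_top
        · rw [ea_snoc E D δ hQ hv w, myArr_eq hL]
          obtain ⟨e₀, he₀S, he₀⟩ := mem_sortedL.mp (List.head_mem hL)
          have he₀f := Finset.mem_filter.mp he₀S
          have hmem₀ := Set.mem_image_of_mem (fun e => ((arrD D δ e : ℕ) : ℕ∞))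
            (Set.mem_setOf_eq ▸ ⟨he₀f.1, he₀f.2.1, he₀f.2.2.1,
              by rw [ht0]; exact_mod_cast he₀f.2.2.2⟩ :
              e₀ ∈ {e : TimeArc V | e ∈ E ∧ e.src = v ∧ e.dst = w ∧
                preA E D δ Q ≤ (e.time : ℕ∞)})
          have hb0 : sInf ((fun e => ((arrD D δ e : ℕ) : ℕ∞)) ''
              {e : TimeArc V | e ∈ E ∧ e.src = v ∧ e.dst = w ∧ preA E D δ Q ≤ (e.time : ℕ∞)})
              ≤ (((sortedL E v w t0).head hL + δ : ℕ) : ℕ∞) := by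
            refine le_trans (sInf_le hmem₀) ?_
            show ((arrD D δ e₀ : ℕ) : ℕ∞) ≤ _
            have harr : arrD D δ e₀ ≤ (sortedL E v w t0).head hL + δ := by
              unfold arrD
              rw [← he₀]
              split <;> omega
            exact_mod_cast harr
          split
          · next hk =>
            obtain ⟨e', he'S, he'D, he'le⟩ := exists_undelayed E v w t0 D (hS ▸ hk)
            refine le_min hb0 ?_
            have he'f := Finset.mem_filter.mp he'S
            have hmem' := Set.mem_image_of_mem (fun e => ((arrD D δ e : ℕ) : ℕ∞))
              (Set.mem_setOf_eq ▸ ⟨he'f.1, he'f.2.1, he'f.2.2.1,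
                by rw [ht0]; exact_mod_cast he'f.2.2.2⟩ :
                e' ∈ {e : TimeArc V | e ∈ E ∧ e.src = v ∧ e.dst = w ∧
                  preA E D δ Q ≤ (e.time : ℕ∞)})
            refine le_trans (sInf_le hmem') ?_
            show ((arrD D δ e' : ℕ) : ℕ∞) ≤ _
            have harr : arrD D δ e' = e'.time + e'.trav := by
              unfold arrD
              rw [if_neg he'D]
              omega
            rw [harr]
            exact_mod_cast he'le
          · exact hb0
      -- Claim 3
      have claim3 : arrivalFn E δ v w (preA E D δ Q) ((D ∩ S).card) ≤
          arrivalFn E δ v w (worstArrival E δ Q D₁.card) (y - D₁.card) :=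
        by
          refine arrivalFn_mono E δ v w ?_ ?_
          · exact le_trans claim1 (preA_le_worst
              (Finset.Subset.trans hsub1 hDE) (le_refl _))
          · omega
      refine le_trans claim2 (le_trans claim3 (Finset.le_sup
        (f := fun y' => arrivalFn E δ v w (worstArrival E δ Q y') (y - y')) ?_))
      exact Finset.mem_range.mpr (by omega)
  · apply Finset.sup_le
    intro y' hy'
    rw [Finset.mem_range] at hy'
    obtain ⟨D₁, hD₁E, hD₁c, hD₁w⟩ := exists_preA_eq_worst E δ Q y'
    rw [← hD₁w, worstArrival_eq_preSet]
    rcases eq_or_ne (preA E D₁ δ Q) ⊤ with htop | hfin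
    · have heq : earliestArrival E D₁ δ (Q ++ [w]) = ⊤ :=
        ea_snoc_top hQ hv w (fun e _ _ _ hle => by
          rw [htop, top_le_iff] at hle
          exact (ENat.coe_ne_top e.time) hle)
      rw [arrivalFn_def, if_pos htop]
      have hmem : (⊤ : ℕ∞) ∈ preSet E δ (Q ++ [w]) y :=
        ⟨D₁, hD₁E, by omega, by rw [hpre D₁, heq]⟩
      exact le_sSup hmem
    · obtain ⟨t0, ht0'⟩ := WithTop.ne_top_iff_exists.mp hfin
      have ht0 : preA E D₁ δ Q = (t0 : ℕ∞) := ht0'.symm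
      rw [ht0, arrivalFn_coe]
      set S := E.filter (fun a => a.src = v ∧ a.dst = w ∧ t0 ≤ a.time) with hS
      by_cases hL : sortedL E v w t0 = []
      · have heq : earliestArrival E D₁ δ (Q ++ [w]) = ⊤ := by
          apply ea_snoc_top hQ hv w
          intro e he1 he2 he3 hle
          rw [ht0] at hle
          have hmem2 : e.time + e.trav ∈ sortedL E v w t0 :=
            mem_sortedL.mpr ⟨e, Finset.mem_filter.mpr ⟨he1, he2, he3, by exact_mod_cast hle⟩, rfl⟩
          rw [hL] at hmem2
          simp at hmem2
        rw [hL, myArr_nil]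
        have hmem : (⊤ : ℕ∞) ∈ preSet E δ (Q ++ [w]) y :=
          ⟨D₁, hD₁E, by omega, by rw [hpre D₁, heq]⟩
        exact le_sSup hmem
      · obtain ⟨F, hFS, hFc, hFk⟩ := exists_F E v w t0 (y - y')
        set D := D₁ ∪ F with hD
        have hDE : D ⊆ E :=
          Finset.union_subset hD₁E
            (Finset.Subset.trans hFS (Finset.filter_subset _ _))
        have hDc : D.card ≤ y := le_trans (Finset.card_union_le _ _) (by omega)
        have hmem : preA E D δ (Q ++ [w]) ∈ preSet E δ (Q ++ [w]) y := ⟨D, hDE, hDc, rfl⟩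
        refine le_trans ?_ (le_sSup hmem)
        rw [hpre D, ea_snoc E D δ hQ hv w]
        apply le_sInf
        rintro b ⟨e, ⟨heE, hesrc, hedst, hepre⟩, rfl⟩
        have hTle : (t0 : ℕ∞) ≤ (e.time : ℕ∞) := by
          rw [← ht0]
          exact le_trans (preA_anti Finset.subset_union_left Q) hepre
        have het : t0 ≤ e.time := by exact_mod_cast hTle
        have heS : e ∈ E.filter (fun a => a.src = v ∧ a.dst = w ∧ t0 ≤ a.time) :=
          Finset.mem_filter.mpr ⟨heE, hesrc, hedst, het⟩
        have huaL : e.time + e.trav ∈ sortedL E v w t0 := mem_sortedL.mpr ⟨e, heS, rfl⟩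
        show myArr δ (sortedL E v w t0) (y - y') ≤ ((arrD D δ e : ℕ) : ℕ∞)
        by_cases heD : e ∈ D
        · refine le_trans (myArr_le_head hL δ (y - y')) ?_
          have h1 : (sortedL E v w t0).head hL ≤ e.time + e.trav :=
            head_le_of_sorted (sortedL_sorted E v w t0) hL huaL
          have h2 : arrD D δ e = e.time + e.trav + δ := by
            unfold arrD; rw [if_pos heD]
          rw [h2]
          exact_mod_cast Nat.add_le_add_right h1 δ
        · have heF : e ∉ F := fun hf => heD (Finset.mem_union_right _ hf)
          obtain ⟨hk, hle⟩ := hFk e heS heF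
          refine le_trans (myArr_le_getElem δ (y - y') hk) ?_
          have h2 : arrD D δ e = e.time + e.trav := by
            unfold arrD; rw [if_neg heD]; omega
          rw [h2]
          exact_mod_cast hle

end Aux8

theorem statement8 {V : Type} [DecidableEq V] (E : Finset (TimeArc V))
    (δ x : ℕ) (R : List V) :
    ∀ j : ℕ, 1 ≤ j → j ≤ R.length → ∀ y : ℕ, y ≤ x →
      dpRev E δ (R.take j).reverse y = worstArrival E δ (R.take j) y := by
  intro j
  induction j with
  | zero => intro h1; omega
  | succ j ih =>
    intro h1 h2 y hy
    rcases Nat.lt_or_ge j 1 with hj | hj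
    · -- j = 0
      have hj0 : j = 0 := by omega
      subst hj0
      have hRne : R ≠ [] := by
        intro h
        rw [h] at h2
        simp at h2
      obtain ⟨r, R', rfl⟩ := List.exists_cons_of_ne_nil hRne
      show dpRev E δ ((r :: R').take 1).reverse y = worstArrival E δ ((r :: R').take 1) y
      have h3 : (r :: R').take 1 = [r] := by simp
      rw [h3]
      show dpRev E δ [r] y = worstArrival E δ [r] y
      rw [show dpRev E δ [r] y = 0 from rfl, worstArrival, if_pos (by simp)]
    · -- j ≥ 1
      have hjR : j < R.length := by omega
      have htake : R.take (j+1) = R.take j ++ [R[j]'hjR] := by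
        rw [List.take_succ, List.getElem?_eq_getElem hjR]
        rfl
      have hQne : R.take j ≠ [] := by
        apply List.ne_nil_of_length_pos
        rw [List.length_take]
        omega
      have hvlast : (R.take j).getLast? = some ((R.take j).getLast hQne) :=
        List.getLast?_eq_getLast hQne
      rw [htake, Aux8.step E δ hQne hvlast (R[j]'hjR) y, List.reverse_append]
      obtain ⟨v0, rest, hrev⟩ := List.exists_cons_of_ne_nil
        (l := (R.take j).reverse) (by simpa using hQne)
      have hv0 : (R.take j).getLast hQne = v0 := by
        have h4 : (R.take j).getLast? = some v0 := by
          rw [List.getLast?_eq_head?_reverse, hrev]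
          rfl
        rw [hvlast] at h4
        exact Option.some_inj.mp h4
      rw [hrev]
      show dpRev E δ ((R[j]'hjR) :: v0 :: rest) y = _
      rw [dpRev]
      apply Finset.sup_congr rfl
      intro y' hy'
      rw [Finset.mem_range] at hy'
      rw [← hrev, ih (by omega) (by omega) y' (by omega), hv0]
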